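/- arXiv:1906.01576 — 2 statements merged into one kernel-verified Lean document; each statement's English description precedes it below -/
import Mathlib

section
/- Let m ≥ 1 and let S ⊂ ℝ^m be a compact convex set with non-empty interior. Then there exists an invertible affine map T : ℝ^m → ℝ^m such that B(0, 1/m) ⊆ T(S) ⊆ B(0, 1), where B(0,r) is the open ball of radius r (with the closed ball inclusion for the inner ball allowed). -/
open Metric Set Matrix
open scoped RealInnerProductSpace

noncomputable section

/-- coordinate bound in Euclidean space -/
private lemma coord_le_norm {k : ℕ} (v : EuclideanSpace ℝ (Fin k)) (i : Fin k) :
    |v i| ≤ ‖v‖ := by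
  rw [EuclideanSpace.norm_eq]
  rw [show |v i| = Real.sqrt ((v i) ^ 2) by rw [Real.sqrt_sq_eq_abs]]
  apply Real.sqrt_le_sqrt
  have h := Finset.single_le_sum (f := fun j => ‖v j‖ ^ 2)
    (fun j _ => by positivity) (Finset.mem_univ i)
  simpa [Real.norm_eq_abs, sq_abs] using h

private lemma dot_eq_inner {k : ℕ} (v w : EuclideanSpace ℝ (Fin k)) :
    (WithLp.equiv 2 (Fin k → ℝ) v) ⬝ᵥ (WithLp.equiv 2 (Fin k → ℝ) w) = ⟪v, w⟫ := by
  simp [dotProduct, PiLp.inner_apply, RCLike.inner_apply, mul_comm]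

/-- determinant of a rank-one perturbation of a multiple of the identity -/
private lemma det_aux (k : ℕ) (u : Fin (k + 1) → ℝ) (hu : u ⬝ᵥ u = 1) (α β : ℝ)
    (hβ : β ≠ 0) :
    (β • (1 : Matrix (Fin (k + 1)) (Fin (k + 1)) ℝ) + (α - β) • Matrix.vecMulVec u u).det
      = α * β ^ k := by
  have h1 : β • (1 : Matrix (Fin (k + 1)) (Fin (k + 1)) ℝ) + (α - β) • Matrix.vecMulVec u u
      = β • ((1 : Matrix (Fin (k + 1)) (Fin (k + 1)) ℝ)
          + Matrix.replicateCol Unit ((β⁻¹ * (α - β)) • u) * Matrix.replicateRow Unit u) := by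
    rw [smul_add]
    congr 1
    rw [Matrix.replicateCol_smul, Matrix.smul_mul, ← Matrix.vecMulVec_eq Unit, smul_smul]
    congr 1
    field_simp
  rw [h1, Matrix.det_smul, Matrix.det_one_add_replicateCol_mul_replicateRow, dotProduct_smul, hu,
    Fintype.card_fin]
  field_simp
  linear_combination (β ^ k * α - β ^ k * β) * mul_inv_cancel₀ hβ

/-- the scalar inequality coming from the variational argument -/
private lemma john_eps (n : ℕ) (s : ℝ) (hs : (n : ℝ) + 1 < s) :
    ∃ ε : ℝ, 0 < ε ∧ ε ≤ 1 / 4 ∧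
      1 < (1 + ε * (s - 1)) * Real.sqrt (1 - 2 * ε) ^ n := by
  have hn0 : (0 : ℝ) ≤ n := Nat.cast_nonneg n
  have hs1 : 1 < s := by linarith
  set ε : ℝ := min (1 / (4 * ((n : ℝ) + 1))) ((s - ((n : ℝ) + 1)) / (2 * (s - 1) * n + 1))
    with hεdef
  have hden : (0 : ℝ) < 2 * (s - 1) * n + 1 := by
    nlinarith [mul_nonneg (by linarith : (0 : ℝ) ≤ s - 1) hn0]
  have hεpos : 0 < ε := by
    apply lt_min (by positivity)
    apply div_pos (by linarith) hden
  have hεle : ε ≤ 1 / (4 * ((n : ℝ) + 1)) := min_le_left _ _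
  have hεle2 : ε * (2 * (s - 1) * n + 1) ≤ s - ((n : ℝ) + 1) := by
    have h := min_le_right (1 / (4 * ((n : ℝ) + 1))) ((s - ((n : ℝ) + 1)) / (2 * (s - 1) * n + 1))
    rw [← hεdef] at h
    calc ε * (2 * (s - 1) * n + 1)
        ≤ ((s - ((n : ℝ) + 1)) / (2 * (s - 1) * n + 1)) * (2 * (s - 1) * n + 1) :=
          mul_le_mul_of_nonneg_right h (le_of_lt hden)
      _ = s - ((n : ℝ) + 1) := by rw [div_mul_cancel₀ _ hden.ne']
  have hε4 : ε ≤ 1 / 4 := by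
    refine hεle.trans ?_
    rw [div_le_div_iff₀ (by positivity) (by norm_num)]
    nlinarith
  have hnε : (n : ℝ) * ε ≤ 1 / 4 := by
    calc (n : ℝ) * ε ≤ (n : ℝ) * (1 / (4 * ((n : ℝ) + 1))) :=
          mul_le_mul_of_nonneg_left hεle hn0
      _ ≤ 1 / 4 := by
          rw [mul_one_div, div_le_div_iff₀ (by positivity) (by norm_num)]
          nlinarith
  refine ⟨ε, hεpos, hε4, ?_⟩
  have h2ε : (0 : ℝ) ≤ 1 - 2 * ε := by linarith
  have hβsq : Real.sqrt (1 - 2 * ε) ^ 2 = 1 - 2 * ε := Real.sq_sqrt h2ε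
  have hβ0 : (0 : ℝ) ≤ Real.sqrt (1 - 2 * ε) := Real.sqrt_nonneg _
  have hBern : 1 - 2 * (n : ℝ) * ε ≤ (1 - 2 * ε) ^ n := by
    have h := one_add_mul_le_pow (a := -(2 * ε)) (by linarith) n
    have h2 : 1 + (n : ℝ) * (-(2 * ε)) = 1 - 2 * (n : ℝ) * ε := by ring
    have h3 : (1 + -(2 * ε)) = 1 - 2 * ε := by ring
    rw [h2, h3] at h
    exact h
  have hprod : 1 < (1 + 2 * ε * (s - 1)) * (1 - 2 * (n : ℝ) * ε) := by
    nlinarith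
  have hP2 : 1 < ((1 + ε * (s - 1)) * Real.sqrt (1 - 2 * ε) ^ n) ^ 2 := by
    have hpow : (Real.sqrt (1 - 2 * ε) ^ n) ^ 2 = (1 - 2 * ε) ^ n := by
      rw [← pow_mul, mul_comm n 2, pow_mul, hβsq]
    have e1 : ((1 + ε * (s - 1)) * Real.sqrt (1 - 2 * ε) ^ n) ^ 2
        = (1 + ε * (s - 1)) ^ 2 * ((1 - 2 * ε) ^ n) := by
      rw [mul_pow, hpow]
    rw [e1]
    have hA : 1 + 2 * ε * (s - 1) ≤ (1 + ε * (s - 1)) ^ 2 := by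
      nlinarith [sq_nonneg (ε * (s - 1))]
    have hBpos : (0 : ℝ) < 1 - 2 * (n : ℝ) * ε := by linarith
    have hApos : (0 : ℝ) < 1 + 2 * ε * (s - 1) := by nlinarith
    nlinarith [pow_nonneg h2ε n]
  have hPnn : (0 : ℝ) ≤ (1 + ε * (s - 1)) * Real.sqrt (1 - 2 * ε) ^ n :=
    mul_nonneg (by nlinarith) (pow_nonneg hβ0 n)
  nlinarith

private abbrev Euc (k : ℕ) : Type := EuclideanSpace ℝ (Fin k)

set_option maxHeartbeats 2000000 in
private lemma john_main (n : ℕ) (S : Set (Euc (n + 1)))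
    (hS : IsCompact S) (hconv : Convex ℝ S) (hint : (interior S).Nonempty) :
    ∃ T : Euc (n + 1) ≃ᵃ[ℝ] Euc (n + 1),
      Metric.ball 0 (1 / ((n : ℝ) + 1)) ⊆ ⇑T '' S ∧
        ⇑T '' S ⊆ Metric.closedBall 0 1 := by
  classical
  -- a bound for S
  obtain ⟨R, hR⟩ := (Metric.isBounded_iff_subset_closedBall 0).1 hS.isBounded
  have hRS : ∀ y ∈ S, ‖y‖ ≤ |R| := fun y hy =>
    (mem_closedBall_zero_iff.1 (hR hy)).trans (le_abs_self R)
  -- interior ball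
  obtain ⟨x₀, hx₀⟩ := hint
  obtain ⟨δ, hδpos, hδ⟩ := Metric.isOpen_iff.1 isOpen_interior x₀ hx₀
  have hδS : Metric.ball x₀ δ ⊆ S := hδ.trans interior_subset
  -- the feasible set of (matrix, center) pairs
  set F : Set (Matrix (Fin (n + 1)) (Fin (n + 1)) ℝ × Euc (n + 1)) :=
    {p | ∀ x ∈ Metric.closedBall (0 : Euc (n + 1)) 1, Matrix.toEuclideanLin p.1 x + p.2 ∈ S}
    with hF
  have htel_one : ∀ x : Euc (n + 1),
      Matrix.toEuclideanLin (1 : Matrix (Fin (n + 1)) (Fin (n + 1)) ℝ) x = x := by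
    intro x
    apply (WithLp.equiv 2 (Fin (n + 1) → ℝ)).injective
    simp [Matrix.piLp_ofLp_toEuclideanLin, Matrix.toLin'_one]
  -- a feasible point with nonzero determinant
  have hmem0 : ((δ / 2) • (1 : Matrix (Fin (n + 1)) (Fin (n + 1)) ℝ), x₀) ∈ F := by
    intro x hx
    apply hδS
    have hx1 : ‖x‖ ≤ 1 := mem_closedBall_zero_iff.1 hx
    have he : Matrix.toEuclideanLin ((δ / 2) • (1 : Matrix (Fin (n + 1)) (Fin (n + 1)) ℝ)) x
        = (δ / 2) • x := by
      rw [_root_.map_smul]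
      simp only [LinearMap.smul_apply]
      rw [htel_one]
    rw [Metric.mem_ball, he, dist_eq_norm, add_sub_cancel_right, norm_smul,
      Real.norm_eq_abs, abs_of_pos (by linarith : (0:ℝ) < δ / 2)]
    nlinarith [norm_nonneg x]
  -- F is closed
  have hclosed : IsClosed F := by
    have hFeq : F = ⋂ x ∈ Metric.closedBall (0 : Euc (n + 1)) 1,
        (fun p : Matrix (Fin (n + 1)) (Fin (n + 1)) ℝ × Euc (n + 1) =>
          Matrix.toEuclideanLin p.1 x + p.2) ⁻¹' S := by
      ext p; simp [hF]
    rw [hFeq]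
    refine isClosed_biInter fun x _ => IsClosed.preimage ?_ hS.isClosed
    have hlin : IsLinearMap ℝ
        (fun p : Matrix (Fin (n + 1)) (Fin (n + 1)) ℝ × Euc (n + 1) =>
          Matrix.toEuclideanLin p.1 x + p.2) := by
      constructor
      · intro p q
        simp only [Prod.fst_add, Prod.snd_add, map_add, LinearMap.add_apply]
        abel
      · intro c p
        simp only [Prod.smul_fst, Prod.smul_snd, _root_.map_smul, LinearMap.smul_apply]
        rw [smul_add]
    exact (hlin.mk' _).continuous_of_finiteDimensional
  -- F is contained in a compact set
  set C : ℝ := 2 * |R| + 1 with hC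
  have hQcompact : IsCompact
      ((Set.univ.pi fun _ : Fin (n + 1) => Set.univ.pi fun _ : Fin (n + 1) =>
          Set.Icc (-C) C : Set (Matrix (Fin (n + 1)) (Fin (n + 1)) ℝ)) ×ˢ
        Metric.closedBall (0 : Euc (n + 1)) (|R| + 1)) := by
    refine IsCompact.prod ?_ (isCompact_closedBall _ _)
    exact isCompact_univ_pi fun i => isCompact_univ_pi fun j => isCompact_Icc
  have hFsub : F ⊆ (Set.univ.pi fun _ : Fin (n + 1) => Set.univ.pi fun _ : Fin (n + 1) =>
      Set.Icc (-C) C : Set (Matrix (Fin (n + 1)) (Fin (n + 1)) ℝ)) ×ˢ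
      Metric.closedBall (0 : Euc (n + 1)) (|R| + 1) := by
    rintro ⟨M, b⟩ hp
    have hb : b ∈ S := by
      have h0 := hp 0 (by simp)
      simpa using h0
    have hbn : ‖b‖ ≤ |R| := hRS b hb
    constructor
    · intro i _
      intro j _
      simp only [Set.mem_Icc, ← abs_le]
      have hsingle : (EuclideanSpace.single j (1 : ℝ)) ∈
          Metric.closedBall (0 : Euc (n + 1)) 1 := by
        rw [mem_closedBall_zero_iff, EuclideanSpace.norm_single]
        norm_num
      have hy := hp (EuclideanSpace.single j (1 : ℝ)) hsingle
      have hyn : ‖Matrix.toEuclideanLin M (EuclideanSpace.single j (1 : ℝ)) + b‖ ≤ |R| :=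
        hRS _ hy
      have hMn : ‖Matrix.toEuclideanLin M (EuclideanSpace.single j (1 : ℝ))‖ ≤ 2 * |R| := by
        have h2 : ‖Matrix.toEuclideanLin M (EuclideanSpace.single j (1 : ℝ))‖
            = ‖Matrix.toEuclideanLin M (EuclideanSpace.single j (1 : ℝ)) + b - b‖ := by
          rw [add_sub_cancel_right]
        rw [h2]
        calc ‖Matrix.toEuclideanLin M (EuclideanSpace.single j (1 : ℝ)) + b - b‖
            ≤ ‖Matrix.toEuclideanLin M (EuclideanSpace.single j (1 : ℝ)) + b‖ + ‖b‖ :=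
              norm_sub_le _ _
          _ ≤ 2 * |R| := by linarith
      have hcoord : (Matrix.toEuclideanLin M (EuclideanSpace.single j (1 : ℝ))) i = M i j := by
        rw [Matrix.toEuclideanLin_apply]
        have h3 : (WithLp.equiv 2 (Fin (n + 1) → ℝ)) (EuclideanSpace.single j (1 : ℝ))
            = Pi.single j (1 : ℝ) := by
          rfl
        rw [WithLp.ofLp_toLp, show (EuclideanSpace.single j (1:ℝ)).ofLp = Pi.single j 1 from h3,
          Matrix.mulVec_single]
        simp
      have h4 := coord_le_norm (Matrix.toEuclideanLin M (EuclideanSpace.single j (1 : ℝ))) i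
      rw [hcoord] at h4
      rw [hC]
      linarith
    · rw [mem_closedBall_zero_iff]
      linarith
  have hFcompact : IsCompact F := hQcompact.of_isClosed_subset hclosed hFsub
  -- maximize |det|
  obtain ⟨⟨M₀, b₀⟩, hP₀F, hmax⟩ := hFcompact.exists_isMaxOn ⟨_, hmem0⟩
    (((continuous_fst.matrix_det).abs).continuousOn)
  have hmax' : ∀ p ∈ F, |p.1.det| ≤ |M₀.det| := fun p hp => hmax hp
  have hdet0 : 0 < |M₀.det| := by
    have h := hmax' _ hmem0
    have hd : ((δ / 2) • (1 : Matrix (Fin (n + 1)) (Fin (n + 1)) ℝ)).det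
        = (δ / 2) ^ (n + 1) := by
      rw [Matrix.det_smul, Matrix.det_one, Fintype.card_fin, mul_one]
    have hpos : (0 : ℝ) < (δ / 2) ^ (n + 1) := by positivity
    calc (0 : ℝ) < |(δ / 2) ^ (n + 1)| := by rwa [abs_of_pos hpos]
      _ = |((δ / 2) • (1 : Matrix (Fin (n + 1)) (Fin (n + 1)) ℝ)).det| := by rw [hd]
      _ ≤ |M₀.det| := h
  have hdetne : M₀.det ≠ 0 := fun h => by simp [h] at hdet0
  -- the linear equivalence given by M₀
  set L : Euc (n + 1) ≃ₗ[ℝ] Euc (n + 1) :=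
    Matrix.toLinearEquiv (PiLp.basisFun 2 ℝ (Fin (n + 1))) M₀ (isUnit_iff_ne_zero.2 hdetne)
    with hL
  have hLapp : ∀ x : Euc (n + 1), L x = Matrix.toEuclideanLin M₀ x := by
    intro x
    rw [hL, Matrix.toLinearEquiv_apply, Matrix.toEuclideanLin_eq_toLin]
  -- the affine equivalence
  set T₁ : Euc (n + 1) ≃ᵃ[ℝ] Euc (n + 1) :=
    (AffineEquiv.constVAdd ℝ (Euc (n + 1)) (-b₀)).trans L.symm.toAffineEquiv with hT₁
  have hT₁app : ∀ x : Euc (n + 1), T₁ x = L.symm (-b₀ + x) := fun x => rfl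
  set K' : Set (Euc (n + 1)) := ⇑T₁ '' S with hK'
  have hconv' : Convex ℝ K' := hconv.affine_image T₁.toAffineMap
  -- inner ball
  have hball : Metric.closedBall (0 : Euc (n + 1)) 1 ⊆ K' := by
    intro y hy
    refine ⟨L y + b₀, ?_, ?_⟩
    · have := hP₀F y hy
      simpa [hLapp] using this
    · rw [hT₁app]
      have : -b₀ + (L y + b₀) = L y := by abel
      rw [this, LinearEquiv.symm_apply_apply]
  -- maximality transfers to K'
  have hub : ∀ (N : Matrix (Fin (n + 1)) (Fin (n + 1)) ℝ) (c : Euc (n + 1)),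
      (∀ x ∈ Metric.closedBall (0 : Euc (n + 1)) 1, Matrix.toEuclideanLin N x + c ∈ K') →
      |N.det| ≤ 1 := by
    intro N c hNc
    have hmemF : (M₀ * N, L c + b₀) ∈ F := by
      intro x hx
      have h1 : Matrix.toEuclideanLin (M₀ * N) x = L (Matrix.toEuclideanLin N x) := by
        rw [hLapp]
        apply (WithLp.equiv 2 (Fin (n + 1) → ℝ)).injective
        simp [Matrix.piLp_ofLp_toEuclideanLin, Matrix.toLin'_apply, Matrix.mulVec_mulVec]
      obtain ⟨z, hzS, hz⟩ := hNc x hx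
      have h2 : Matrix.toEuclideanLin N x + c = L.symm (-b₀ + z) := by
        rw [← hz, hT₁app]
      have h5 : Matrix.toEuclideanLin (M₀ * N) x + (L c + b₀) = z := by
        have h6 : L (Matrix.toEuclideanLin N x) + (L c + b₀)
            = L (Matrix.toEuclideanLin N x + c) + b₀ := by
          rw [map_add]; abel
        rw [h1, h6, h2, LinearEquiv.apply_symm_apply]
        abel
      rw [h5]
      exact hzS
    have h3 := hmax' _ hmemF
    simp only [Matrix.det_mul, abs_mul] at h3
    by_contra hlt
    push_neg at hlt
    nlinarith
  -- outer bound : K' is contained in the ball of radius n+1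
  have houter : ∀ q ∈ K', ‖q‖ ≤ (n : ℝ) + 1 := by
    by_contra hcon
    push_neg at hcon
    obtain ⟨p, hpK, hps⟩ := hcon
    set s := ‖p‖ with hsdef
    have hn0 : (0 : ℝ) ≤ n := Nat.cast_nonneg n
    have hs1 : 1 < s := by linarith
    have hspos : 0 < s := by linarith
    obtain ⟨ε, hε0, hε4, hkey⟩ := john_eps n s hps
    set α : ℝ := 1 + ε * (s - 1) with hαdef
    set β : ℝ := Real.sqrt (1 - 2 * ε) with hβdef
    have h2ε : (0 : ℝ) < 1 - 2 * ε := by linarith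
    have hβpos : 0 < β := Real.sqrt_pos.2 h2ε
    have hβsq : β ^ 2 = 1 - 2 * ε := Real.sq_sqrt (le_of_lt h2ε)
    have hαpos : 0 < α := by nlinarith
    set γ : ℝ := ε * (s - 1) with hγdef
    set u : Euc (n + 1) := s⁻¹ • p with hudef
    have hunorm : ‖u‖ = 1 := by
      rw [hudef, norm_smul, Real.norm_eq_abs, abs_of_pos (inv_pos.2 hspos), ← hsdef]
      field_simp
    have hpu : p = s • u := by
      rw [hudef, smul_smul]
      rw [mul_inv_cancel₀ hspos.ne', one_smul]
    set uf : Fin (n + 1) → ℝ := WithLp.equiv 2 (Fin (n + 1) → ℝ) u with hufdef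
    have hudot : uf ⬝ᵥ uf = 1 := by
      rw [hufdef, dot_eq_inner, real_inner_self_eq_norm_sq, hunorm]
      norm_num
    set N := β • (1 : Matrix (Fin (n + 1)) (Fin (n + 1)) ℝ) + (α - β) • Matrix.vecMulVec uf uf
      with hNdef
    have hdetN : N.det = α * β ^ n := det_aux n uf hudot α β hβpos.ne'
    have hvmv : ∀ xf : Fin (n + 1) → ℝ,
        Matrix.vecMulVec uf uf *ᵥ xf = (uf ⬝ᵥ xf) • uf := by
      intro xf
      funext i
      simp only [Matrix.mulVec, Matrix.vecMulVec_apply, dotProduct, Pi.smul_apply,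
        smul_eq_mul]
      rw [Finset.sum_mul]
      exact Finset.sum_congr rfl fun j _ => by ring
    have hNfeas : ∀ x ∈ Metric.closedBall (0 : Euc (n + 1)) 1,
        Matrix.toEuclideanLin N x + (γ • u) ∈ K' := by
      intro x hx
      have hxn : ‖x‖ ≤ 1 := mem_closedBall_zero_iff.1 hx
      set t : ℝ := ⟪u, x⟫ with htdef
      have htabs : |t| ≤ 1 := by
        calc |t| ≤ ‖u‖ * ‖x‖ := abs_real_inner_le_norm u x
          _ ≤ 1 := by rw [hunorm, one_mul]; exact hxn
      have ht1 : -1 ≤ t := (abs_le.1 htabs).1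
      have ht2 : t ≤ 1 := (abs_le.1 htabs).2
      have hNx : Matrix.toEuclideanLin N x = β • x + ((α - β) * t) • u := by
        apply (WithLp.equiv 2 (Fin (n + 1) → ℝ)).injective
        have h1 : (WithLp.equiv 2 (Fin (n + 1) → ℝ)) (Matrix.toEuclideanLin N x)
            = N *ᵥ (WithLp.equiv 2 (Fin (n + 1) → ℝ)) x := by
          simp [Matrix.piLp_ofLp_toEuclideanLin, Matrix.toLin'_apply]
        rw [h1, hNdef, Matrix.add_mulVec, Matrix.smul_mulVec, Matrix.one_mulVec,
          Matrix.smul_mulVec, hvmv, smul_smul]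
        have h2 : uf ⬝ᵥ (WithLp.equiv 2 (Fin (n + 1) → ℝ)) x = t := by
          rw [hufdef, dot_eq_inner, htdef]
        rw [h2]
        rfl
      have hy : Matrix.toEuclideanLin N x + γ • u = β • x + ((α - β) * t + γ) • u := by
        rw [hNx, add_smul]
        abel
      set lam : ℝ := ε * (1 + t) with hlamdef
      have hlam0 : 0 ≤ lam := by nlinarith
      have hlam1 : lam ≤ 2 * ε := by nlinarith
      have h1lam : 0 < 1 - lam := by linarith
      set w : Euc (n + 1) := x - t • u with hwdef
      have hwu : ⟪w, u⟫ = 0 := by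
        rw [hwdef, inner_sub_left, real_inner_smul_left, real_inner_self_eq_norm_sq, hunorm,
          real_inner_comm, ← htdef]
        ring
      have hwn : ‖w‖ ^ 2 = ‖x‖ ^ 2 - t ^ 2 := by
        rw [hwdef, norm_sub_sq_real, real_inner_smul_right, real_inner_comm u x, ← htdef,
          norm_smul,
          Real.norm_eq_abs, hunorm, mul_one, sq_abs]
        ring
      have hyp : (β • x + ((α - β) * t + γ) • u) - lam • p
          = β • w + ((1 - ε) * t - ε) • u := by
        rw [hpu, hwdef]
        have hsc2 : (α - β) * t + γ = ((1 - ε) * t - ε) - β * t + lam * s := by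
          rw [hαdef, hγdef, hlamdef]; ring
        rw [hsc2]
        module
      have hx2 : ‖x‖ ^ 2 ≤ 1 := by nlinarith [norm_nonneg x]
      have hnorm2 : ‖(β • x + ((α - β) * t + γ) • u) - lam • p‖ ^ 2 ≤ (1 - lam) ^ 2 := by
        have hident : (1 - 2 * ε) * (1 - t ^ 2) + ((1 - ε) * t - ε) ^ 2
            = (1 - lam) ^ 2 := by
          rw [hlamdef]; ring
        rw [hyp, norm_add_sq_real, real_inner_smul_left, real_inner_smul_right, hwu,
          norm_smul, norm_smul, Real.norm_eq_abs, Real.norm_eq_abs, hunorm, mul_zero,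
          mul_zero, mul_zero, add_zero]
        have e1 : (|β| * ‖w‖) ^ 2 = (1 - 2 * ε) * (‖x‖ ^ 2 - t ^ 2) := by
          rw [mul_pow, sq_abs, hβsq, hwn]
        have e2 : (|(1 - ε) * t - ε| * 1) ^ 2 = ((1 - ε) * t - ε) ^ 2 := by
          rw [mul_one, sq_abs]
        have e3 : (1 - 2 * ε) * (‖x‖ ^ 2 - t ^ 2) ≤ (1 - 2 * ε) * (1 - t ^ 2) :=
          mul_le_mul_of_nonneg_left (by linarith) h2ε.le
        rw [e1, e2]
        linarith [hident]
      have hnormle : ‖(β • x + ((α - β) * t + γ) • u) - lam • p‖ ≤ 1 - lam := by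
        nlinarith [norm_nonneg ((β • x + ((α - β) * t + γ) • u) - lam • p)]
      set z : Euc (n + 1) := (1 - lam)⁻¹ • ((β • x + ((α - β) * t + γ) • u) - lam • p)
        with hzdef
      have hzb : z ∈ Metric.closedBall (0 : Euc (n + 1)) 1 := by
        rw [mem_closedBall_zero_iff, hzdef, norm_smul, Real.norm_eq_abs,
          abs_of_pos (inv_pos.2 h1lam)]
        calc (1 - lam)⁻¹ * ‖(β • x + ((α - β) * t + γ) • u) - lam • p‖
            ≤ (1 - lam)⁻¹ * (1 - lam) :=
              mul_le_mul_of_nonneg_left hnormle (le_of_lt (inv_pos.2 h1lam))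
          _ = 1 := by field_simp
      have hcomb : β • x + ((α - β) * t + γ) • u = lam • p + (1 - lam) • z := by
        rw [hzdef, smul_inv_smul₀ h1lam.ne']
        abel
      rw [hy, hcomb]
      exact hconv' hpK (hball hzb) hlam0 (by linarith) (by ring)
    have hle1 := hub N (γ • u) hNfeas
    have habs : |N.det| = α * β ^ n := by
      rw [hdetN, abs_of_pos (by positivity)]
    rw [habs] at hle1
    linarith
  -- final rescaling
  have hmpos : (0 : ℝ) < (n : ℝ) + 1 := by positivity
  have hmne : ((n : ℝ) + 1)⁻¹ ≠ 0 := by positivity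
  set T : Euc (n + 1) ≃ᵃ[ℝ] Euc (n + 1) :=
    T₁.trans (LinearEquiv.smulOfNeZero ℝ (Euc (n + 1)) (((n : ℝ) + 1)⁻¹)
      hmne).toAffineEquiv with hT
  have hTapp : ∀ x : Euc (n + 1), T x = ((n : ℝ) + 1)⁻¹ • T₁ x := fun x => rfl
  refine ⟨T, ?_, ?_⟩
  · intro y hy
    rw [mem_ball_zero_iff] at hy
    have hz : ((n : ℝ) + 1) • y ∈ Metric.closedBall (0 : Euc (n + 1)) 1 := by
      rw [mem_closedBall_zero_iff, norm_smul, Real.norm_eq_abs, abs_of_pos hmpos]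
      have h6 := mul_lt_mul_of_pos_left hy hmpos
      rw [mul_one_div, div_self hmpos.ne'] at h6
      linarith
    obtain ⟨v, hvS, hv⟩ := hball hz
    refine ⟨v, hvS, ?_⟩
    rw [hTapp, hv, smul_smul, inv_mul_cancel₀ hmpos.ne', one_smul]
  · rintro y ⟨v, hvS, rfl⟩
    rw [mem_closedBall_zero_iff, hTapp, norm_smul, Real.norm_eq_abs,
      abs_of_pos (inv_pos.2 hmpos)]
    have h1 : ‖T₁ v‖ ≤ (n : ℝ) + 1 := houter _ ⟨v, hvS, rfl⟩
    calc ((n : ℝ) + 1)⁻¹ * ‖T₁ v‖ ≤ ((n : ℝ) + 1)⁻¹ * ((n : ℝ) + 1) :=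
        mul_le_mul_of_nonneg_left h1 (le_of_lt (inv_pos.2 hmpos))
      _ = 1 := inv_mul_cancel₀ hmpos.ne'

/-- Normalization of a convex body via John's theorem: some invertible affine image of `S`
is squeezed between balls of radii `1/m` and `1`. -/
theorem stmt_14 (m : ℕ) (hm : 1 ≤ m) (S : Set (EuclideanSpace ℝ (Fin m)))
    (hS : IsCompact S) (hconv : Convex ℝ S) (hint : (interior S).Nonempty) :
    ∃ T : EuclideanSpace ℝ (Fin m) ≃ᵃ[ℝ] EuclideanSpace ℝ (Fin m),
      Metric.ball 0 (1 / (m : ℝ)) ⊆ ⇑T '' S ∧ ⇑T '' S ⊆ Metric.closedBall 0 1 := by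
  obtain ⟨n, rfl⟩ : ∃ n, m = n + 1 := ⟨m - 1, (Nat.succ_pred_eq_of_pos hm).symm⟩
  have hcast : (1 : ℝ) / ((n + 1 : ℕ) : ℝ) = 1 / ((n : ℝ) + 1) := by push_cast; ring
  rw [hcast]
  exact john_main n S hS hconv hint

end
end

section
/- Fix p > 1 and n ≥ 2 with p = (4n−2)/3, and set β = (n+1)/(4n−5) and λ = −β/2. Then the function ψ(θ) = −(β/2) tan(θ/2) satisfies, for all θ ∈ (0, π), the first-order ODE 0 = ((p−1)ψ(θ)² + λ²) ψ'(θ) + (λ² + ψ(θ)²) [ (p−1)ψ(θ)² + (n−2) cot(θ) ψ(θ) + λ²(p−1) + λ(n−p) ]. -/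
/-- For `p = (4n-2)/3`, `β = (n+1)/(4n-5)`, `λ = -β/2`, the function
`ψ(θ) = -(β/2) tan(θ/2)` solves the ODE (1.3) on `(0, π)`. -/
theorem stmt_17 (n : ℕ) (hn : 2 ≤ n) (p : ℝ) (hp : 1 < p)
    (hpn : p = (4 * n - 2) / 3)
    (β lam : ℝ) (hβ : β = (n + 1) / (4 * n - 5)) (hlam : lam = -β / 2)
    (ψ : ℝ → ℝ) (hψ : ∀ θ : ℝ, ψ θ = -(β / 2) * Real.tan (θ / 2)) :
    ∀ θ ∈ Set.Ioo (0 : ℝ) Real.pi,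
      0 = ((p - 1) * ψ θ ^ 2 + lam ^ 2) * deriv ψ θ +
        (lam ^ 2 + ψ θ ^ 2) *
          ((p - 1) * ψ θ ^ 2 + ((n : ℝ) - 2) * (Real.cos θ / Real.sin θ) * ψ θ +
            lam ^ 2 * (p - 1) + lam * ((n : ℝ) - p)) := by
  have hψfun : ψ = fun x => -(β / 2) * Real.tan (x / 2) := funext hψ
  subst hψfun
  rintro θ ⟨h0, hπ⟩
  have hc : 0 < Real.cos (θ / 2) := by
    apply Real.cos_pos_of_mem_Ioo
    constructor <;> nlinarith [Real.pi_pos]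
  have hc' : Real.cos (θ / 2) ≠ 0 := ne_of_gt hc
  have hs : 0 < Real.sin (θ / 2) := Real.sin_pos_of_pos_of_lt_pi (by linarith)
    (by nlinarith [Real.pi_pos])
  have hpyth : Real.sin (θ / 2) ^ 2 + Real.cos (θ / 2) ^ 2 = 1 := Real.sin_sq_add_cos_sq _
  have htan : Real.tan (θ / 2) = Real.sin (θ / 2) / Real.cos (θ / 2) :=
    Real.tan_eq_sin_div_cos _
  have ht : 0 < Real.tan (θ / 2) := by rw [htan]; positivity
  have hsin : Real.sin θ = 2 * Real.sin (θ / 2) * Real.cos (θ / 2) := by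
    have := Real.sin_two_mul (θ / 2)
    rwa [show 2 * (θ / 2) = θ by ring] at this
  have hcos : Real.cos θ = Real.cos (θ / 2) ^ 2 - Real.sin (θ / 2) ^ 2 := by
    have := Real.cos_two_mul' (θ / 2)
    rwa [show 2 * (θ / 2) = θ by ring] at this
  have hcot : Real.cos θ / Real.sin θ
      = (1 - Real.tan (θ / 2) ^ 2) / (2 * Real.tan (θ / 2)) := by
    rw [hsin, hcos, htan]
    field_simp
  have h1c : (1 : ℝ) / Real.cos (θ / 2) ^ 2 = 1 + Real.tan (θ / 2) ^ 2 := by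
    rw [htan]
    field_simp
    linarith [hpyth]
  have hderiv : deriv (fun x => -(β / 2) * Real.tan (x / 2)) θ
      = -(β / 4) * (1 + Real.tan (θ / 2) ^ 2) := by
    have h1 : HasDerivAt (fun x : ℝ => Real.tan (x / 2))
        (1 / Real.cos (θ / 2) ^ 2 * (1 / 2)) θ := by
      have h0 : HasDerivAt (fun x : ℝ => x / 2) (1 / 2) θ := by
        simpa using (hasDerivAt_id θ).div_const 2
      exact (Real.hasDerivAt_tan hc').comp θ h0
    have h2 := (h1.const_mul (-(β / 2))).deriv
    rw [h2, h1c]; ring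
  simp only [hderiv, hcot]
  have hn5 : (4 : ℝ) * n - 5 ≠ 0 := by
    have h2 : (2 : ℝ) ≤ n := by exact_mod_cast hn
    nlinarith
  subst hβ hlam hpn
  have ht' : Real.tan (θ / 2) ≠ 0 := ne_of_gt ht
  field_simp
  ring
end
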